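/- Assume c² := ∫₀^∞ w(x)⁻¹ dx < ∞. Then the right-shift semigroup (S_t)_{t≥0}, S_t f := f(t + ·), is strongly continuous on H_w: for every f ∈ H_w, ‖S_t f − f‖_w → 0 as t ↓ 0. -/

import Mathlib

open MeasureTheory Filter Set
open scoped ENNReal NNReal Topology

/-- `f' : ℝ → H` is a weak derivative of `f : ℝ → H` on `[0,∞)`: it is locally Bochner
integrable and the fundamental theorem of calculus `f(x) = f(0) + ∫₀ˣ f'(y) dy` holds. -/
def HasWeakDeriv {H : Type*} [NormedAddCommGroup H] [NormedSpace ℝ H]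
    (f f' : ℝ → H) : Prop :=
  (∀ x : ℝ, 0 ≤ x → IntegrableOn f' (Icc 0 x)) ∧
    ∀ x : ℝ, 0 ≤ x → f x = f 0 + ∫ y in Ioc (0 : ℝ) x, f' y

/-- The squared norm `‖f‖²_w = |f(0)|²_H + ∫₀^∞ w(x) |f'(x)|²_H dx` of an element of the
`H`-valued Filipovic space, recorded through the value `a = f(0)` and the weak derivative `f'`
(extended-real valued, so membership in `H_w` means this quantity is finite). -/
noncomputable def wNormSq {H : Type*} [NormedAddCommGroup H] (w : ℝ → ℝ) (a : H)
    (f' : ℝ → H) : ℝ≥0∞ :=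
  (‖a‖₊ : ℝ≥0∞) ^ 2 + ∫⁻ x in Ioi (0 : ℝ), ENNReal.ofReal (w x) * (‖f' x‖₊ : ℝ≥0∞) ^ 2

lemma enn_sq_smul {H : Type*} [NormedAddCommGroup H] [NormedSpace ℝ H] (c : ℝ) (v : H) :
    (‖c • v‖₊ : ℝ≥0∞) ^ 2 = ENNReal.ofReal (c ^ 2) * (‖v‖₊ : ℝ≥0∞) ^ 2 := by
  have h1 : (‖c‖₊ : ℝ≥0∞) = ENNReal.ofReal |c| := (Real.enorm_eq_ofReal_abs c)
  rw [nnnorm_smul, ENNReal.coe_mul, mul_pow, h1, sq (ENNReal.ofReal |c|),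
    ← ENNReal.ofReal_mul (abs_nonneg c), ← abs_mul, abs_mul_self, ← sq]

lemma enn_sq_add_le (a b : ℝ≥0∞) : (a + b) ^ 2 ≤ 4 * a ^ 2 + 4 * b ^ 2 := by
  rcases le_total a b with h | h
  · calc (a + b) ^ 2 ≤ (b + b) ^ 2 := by gcongr
    _ = 4 * b ^ 2 := by ring
    _ ≤ 4 * a ^ 2 + 4 * b ^ 2 := le_add_self
  · calc (a + b) ^ 2 ≤ (a + a) ^ 2 := by gcongr
    _ = 4 * a ^ 2 := by ring
    _ ≤ 4 * a ^ 2 + 4 * b ^ 2 := le_self_add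

lemma l2sq {H : Type*} [NormedAddCommGroup H] (h : ℝ → H) (μ : Measure ℝ) :
    (eLpNorm h 2 μ) ^ 2 = ∫⁻ x, (‖h x‖₊ : ℝ≥0∞) ^ 2 ∂μ := by
  rw [eLpNorm_eq_lintegral_rpow_enorm_toReal (by norm_num) (by norm_num)]
  rw [← ENNReal.rpow_natCast _ 2, ← ENNReal.rpow_mul]
  norm_num
  rfl

/-- Continuity of translation in `L²(ℝ; H)`. -/
lemma tendsto_translate_L2 {H : Type*} [NormedAddCommGroup H]
    (G : ℝ → H) (hG : MemLp G 2 (volume : Measure ℝ)) :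
    Tendsto (fun t : ℝ => eLpNorm (fun x => G (x + t) - G x) 2 volume) (𝓝[>] 0) (𝓝 0) := by
  haveI : Fact ((1:ℝ≥0∞) ≤ 2) := Fact.mk one_le_two
  set Gp := hG.toLp G with hGp
  have hgc : Continuous (fun t : ℝ => (⟨fun x => x + t, by continuity⟩ : C(ℝ, ℝ))) := by
    apply ContinuousMap.continuous_of_continuous_uncurry
    exact continuous_snd.add continuous_fst
  set gmap : ℝ → C(ℝ, ℝ) := fun t => ⟨fun x => x + t, by continuity⟩ with hgmap
  have hgm : ∀ t : ℝ, MeasurePreserving (gmap t) volume volume := fun t =>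
    measurePreserving_add_right volume t
  have key : Tendsto (fun t => Lp.compMeasurePreserving (gmap t) (hgm t) Gp) (𝓝[>] (0:ℝ))
      (𝓝 (Lp.compMeasurePreserving (gmap 0) (hgm 0) Gp)) :=
    Filter.Tendsto.compMeasurePreservingLp tendsto_const_nhds
      ((hgc.tendsto 0).mono_left nhdsWithin_le_nhds) hgm (hgm 0) (by norm_num)
  rw [Lp.tendsto_Lp_iff_tendsto_eLpNorm'] at key
  refine key.congr' ?_
  filter_upwards [] with t
  refine eLpNorm_congr_ae ?_
  have h1 : ⇑(Lp.compMeasurePreserving (gmap t) (hgm t) Gp) =ᵐ[volume] fun x => G (x + t) := by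
    refine (Lp.coeFn_compMeasurePreserving Gp (hgm t)).trans ?_
    exact (hgm t).quasiMeasurePreserving.ae_eq_comp (hG.coeFn_toLp)
  have h0 : ⇑(Lp.compMeasurePreserving (gmap 0) (hgm 0) Gp) =ᵐ[volume] G := by
    refine (Lp.coeFn_compMeasurePreserving Gp (hgm 0)).trans ?_
    have : (⇑Gp ∘ ⇑(gmap 0)) = ⇑Gp := by funext x; simp [hgmap]
    rw [this]; exact hG.coeFn_toLp
  exact h1.sub h0

/-- Lemma 3.5. If `∫₀^∞ w⁻¹ < ∞`, the right-shift semigroup `S_t f = f(t + ·)`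
is strongly continuous on `H_w`: for every `f ∈ H_w`, `‖S_t f − f‖_w → 0` as `t ↓ 0` (stated
here for the squared norm `‖S_t f − f‖²_w = |f(t) − f(0)|² + ∫₀^∞ w(x)|f'(t+x) − f'(x)|² dx`). -/
theorem stmt_7 {H : Type*} [NormedAddCommGroup H] [InnerProductSpace ℝ H] [CompleteSpace H]
    [SecondCountableTopology H]
    (w : ℝ → ℝ) (hwmono : MonotoneOn w (Ici 0)) (hw0 : w 0 = 1)
    (hw1 : ∀ x : ℝ, 0 ≤ x → 1 ≤ w x) (hwmeas : Measurable w)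
    (hc : (∫⁻ x in Ioi (0 : ℝ), ENNReal.ofReal (w x)⁻¹) < ⊤)
    (f f' : ℝ → H) (hf : HasWeakDeriv f f') (hfin : wNormSq w (f 0) f' < ⊤) :
    Tendsto (fun t : ℝ => wNormSq w (f t - f 0) (fun x => f' (t + x) - f' x))
      (𝓝[>] (0 : ℝ)) (𝓝 0) := by
  obtain ⟨hint, hftc⟩ := hf
  simp only [wNormSq] at hfin
  -- a strongly measurable representative of `f'` on `(0,∞)`
  have hsm : AEStronglyMeasurable f' (volume.restrict (Ioi 0)) := by
    have h2 : AEStronglyMeasurable f' (volume.restrict (⋃ n : ℕ, Icc (0:ℝ) n)) := by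
      rw [aestronglyMeasurable_iUnion_iff]
      exact fun n => (hint n n.cast_nonneg).aestronglyMeasurable
    exact h2.mono_measure (Measure.restrict_mono (fun x (hx : x ∈ Ioi (0:ℝ)) => mem_iUnion.2
      ⟨Nat.ceil x, mem_Icc.2 ⟨le_of_lt hx, Nat.le_ceil x⟩⟩) le_rfl)
  set g : ℝ → H := hsm.mk f' with hgdef
  have hgm : StronglyMeasurable g := hsm.stronglyMeasurable_mk
  have hfg : f' =ᵐ[volume.restrict (Ioi 0)] g := hsm.ae_eq_mk
  have hfg' : ∀ᵐ x ∂(volume : Measure ℝ), x ∈ Ioi (0:ℝ) → f' x = g x :=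
    (ae_restrict_iff' measurableSet_Ioi).1 hfg
  have hwnn : ∀ x : ℝ, 0 < x → 0 ≤ w x := fun x hx => zero_le_one.trans (hw1 x hx.le)
  -- the auxiliary L² function G = √w ⬝ g on (0,∞)
  set G : ℝ → H := (Ioi 0).indicator (fun x => Real.sqrt (w x) • g x) with hGdef
  have hGsm : StronglyMeasurable G :=
    ((hwmeas.sqrt.stronglyMeasurable).smul hgm).indicator measurableSet_Ioi
  have hGsq : ∀ x : ℝ, (‖G x‖₊ : ℝ≥0∞) ^ 2
      = (Ioi 0).indicator (fun x => ENNReal.ofReal (w x) * (‖g x‖₊ : ℝ≥0∞) ^ 2) x := by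
    intro x
    by_cases hx : x ∈ Ioi (0:ℝ)
    · rw [hGdef]
      rw [indicator_of_mem hx, indicator_of_mem hx, enn_sq_smul, Real.sq_sqrt (hwnn x hx)]
    · have h0 : G x = 0 := by rw [hGdef]; exact indicator_of_notMem hx _
      rw [h0, indicator_of_notMem hx]
      simp
  have hGint : ∫⁻ x, (‖G x‖₊ : ℝ≥0∞) ^ 2 ∂volume
      = ∫⁻ x in Ioi 0, ENNReal.ofReal (w x) * (‖g x‖₊ : ℝ≥0∞) ^ 2 := by
    rw [lintegral_congr hGsq, lintegral_indicator measurableSet_Ioi]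
  have hIfg : ∫⁻ x in Ioi (0:ℝ), ENNReal.ofReal (w x) * (‖f' x‖₊ : ℝ≥0∞) ^ 2
      = ∫⁻ x in Ioi 0, ENNReal.ofReal (w x) * (‖g x‖₊ : ℝ≥0∞) ^ 2 :=
    lintegral_congr_ae (hfg.mono fun x hx => by simp only [hx])
  have hIg : (∫⁻ x in Ioi (0:ℝ), ENNReal.ofReal (w x) * (‖g x‖₊ : ℝ≥0∞) ^ 2) < ⊤ := by
    rw [← hIfg]; exact lt_of_le_of_lt le_add_self hfin
  have hGmem : MemLp G 2 (volume : Measure ℝ) := by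
    refine ⟨hGsm.aestronglyMeasurable, ?_⟩
    have hsq : (eLpNorm G 2 volume) ^ 2 < ⊤ := by rw [l2sq, hGint]; exact hIg
    by_contra hcon
    rw [not_lt, top_le_iff] at hcon
    rw [hcon, ENNReal.top_pow (by norm_num)] at hsq
    exact absurd hsq (lt_irrefl ⊤)
  -- Step C : translation continuity in L²
  have hC : Tendsto (fun t : ℝ => (eLpNorm (fun x => G (x + t) - G x) 2 volume) ^ 2)
      (𝓝[>] (0:ℝ)) (𝓝 0) := by
    have := ENNReal.Tendsto.pow (n := 2) (tendsto_translate_L2 G hGmem)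
    simpa using this
  -- Step D : the weight-variation term
  set Dfun : ℝ → ℝ≥0∞ := fun t => ∫⁻ x in Ioi 0,
      ENNReal.ofReal ((Real.sqrt (w (t + x)) - Real.sqrt (w x)) ^ 2) * (‖g (t + x)‖₊ : ℝ≥0∞) ^ 2
    with hDdef
  set Φ : ℝ → ℝ → ℝ≥0∞ := fun t y => (Ioi t).indicator
      (fun y => ENNReal.ofReal ((Real.sqrt (w y) - Real.sqrt (w (y - t))) ^ 2)
        * (‖g y‖₊ : ℝ≥0∞) ^ 2) y
    with hPhidef
  have hDeq : ∀ t : ℝ, 0 < t → Dfun t = ∫⁻ y in Ioi 0, Φ t y := by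
    intro t ht
    have h2 : ∀ x : ℝ, (Ioi (0:ℝ)).indicator
        (fun x => ENNReal.ofReal ((Real.sqrt (w (t + x)) - Real.sqrt (w x)) ^ 2)
          * (‖g (t + x)‖₊ : ℝ≥0∞) ^ 2) x = Φ t (x + t) := by
      intro x
      by_cases hx : x ∈ Ioi (0:ℝ)
      · have hxt : x + t ∈ Ioi t := by
          simp only [mem_Ioi] at hx ⊢; linarith
        rw [indicator_of_mem hx, hPhidef]
        simp only
        rw [indicator_of_mem hxt, add_sub_cancel_right, add_comm x t]
      · have hxt : x + t ∉ Ioi t := by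
          simp only [mem_Ioi, not_lt] at hx ⊢; linarith
        rw [indicator_of_notMem hx, hPhidef]
        simp only
        rw [indicator_of_notMem hxt]
    calc Dfun t
        = ∫⁻ x, (Ioi (0:ℝ)).indicator
            (fun x => ENNReal.ofReal ((Real.sqrt (w (t + x)) - Real.sqrt (w x)) ^ 2)
              * (‖g (t + x)‖₊ : ℝ≥0∞) ^ 2) x ∂volume :=
          (lintegral_indicator measurableSet_Ioi _).symm
      _ = ∫⁻ x, Φ t (x + t) ∂volume := lintegral_congr h2
      _ = ∫⁻ y, Φ t y ∂volume := lintegral_add_right_eq_self (Φ t) t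
      _ = ∫⁻ y, (Ioi (0:ℝ)).indicator (Φ t) y ∂volume := by
          refine lintegral_congr fun y => ?_
          by_cases hy : y ∈ Ioi (0:ℝ)
          · rw [indicator_of_mem hy]
          · rw [indicator_of_notMem hy, hPhidef]
            simp only
            rw [indicator_of_notMem]
            simp only [mem_Ioi, not_lt] at hy ⊢
            linarith
      _ = ∫⁻ y in Ioi 0, Φ t y := lintegral_indicator measurableSet_Ioi _
  have hPhimeas : ∀ t : ℝ, Measurable (Φ t) := by
    intro t
    refine Measurable.indicator ?_ measurableSet_Ioi
    exact (ENNReal.measurable_ofReal.comp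
      ((hwmeas.sqrt.sub ((hwmeas.comp (measurable_id.sub_const t)).sqrt)).pow_const 2)).mul
      (hgm.enorm.pow_const 2)
  have hbound : ∀ᶠ t in 𝓝[>] (0:ℝ), ∀ᵐ y ∂(volume.restrict (Ioi (0:ℝ))),
      Φ t y ≤ ENNReal.ofReal (w y) * (‖g y‖₊ : ℝ≥0∞) ^ 2 := by
    filter_upwards [self_mem_nhdsWithin] with t ht
    have ht' : (0:ℝ) < t := ht
    refine Eventually.of_forall fun y => ?_
    rw [hPhidef]
    simp only
    by_cases hy : y ∈ Ioi t
    · rw [indicator_of_mem hy]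
      refine mul_le_mul_left (ENNReal.ofReal_le_ofReal ?_) _
      have hy' : t < y := hy
      have hyt : (0:ℝ) < y - t := sub_pos.2 hy'
      have h0y : (0:ℝ) < y := lt_trans ht' hy'
      have hw_le : w (y - t) ≤ w y :=
        hwmono (le_of_lt hyt) (le_of_lt h0y) (sub_le_self y (le_of_lt ht'))
      have hs1 : Real.sqrt (w (y - t)) ≤ Real.sqrt (w y) := Real.sqrt_le_sqrt hw_le
      calc (Real.sqrt (w y) - Real.sqrt (w (y - t))) ^ 2
          ≤ (Real.sqrt (w y)) ^ 2 :=
            pow_le_pow_left₀ (sub_nonneg.2 hs1) (sub_le_self _ (Real.sqrt_nonneg _)) 2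
        _ = w y := Real.sq_sqrt (hwnn y h0y)
    · rw [indicator_of_notMem hy]; exact zero_le
  have hv : Monotone (fun x : ℝ => w (max x 0)) := fun a b hab =>
    hwmono (le_max_right a 0) (le_max_right b 0) (max_le_max hab le_rfl)
  have hS : ∀ᵐ y ∂(volume : Measure ℝ), ContinuousAt (fun x : ℝ => w (max x 0)) y := by
    rw [ae_iff]
    exact Set.Countable.measure_zero hv.countable_not_continuousAt _
  have hlim : ∀ᵐ y ∂(volume.restrict (Ioi (0:ℝ))),
      Tendsto (fun t => Φ t y) (𝓝[>] (0:ℝ)) (𝓝 0) := by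
    filter_upwards [ae_restrict_mem measurableSet_Ioi, ae_restrict_of_ae hS] with y hy hcont
    have hy' : (0:ℝ) < y := hy
    have hev : ∀ᶠ t in 𝓝[>] (0:ℝ),
        ENNReal.ofReal ((Real.sqrt (w y) - Real.sqrt (w (max (y - t) 0))) ^ 2)
          * (‖g y‖₊ : ℝ≥0∞) ^ 2 = Φ t y := by
      filter_upwards [Ioo_mem_nhdsGT_of_mem (mem_Ico.2 ⟨le_rfl, hy'⟩)] with t ht
      have hyt : y ∈ Ioi t := ht.2
      rw [hPhidef]
      simp only
      rw [indicator_of_mem hyt, max_eq_left (le_of_lt (sub_pos.2 ht.2))]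
    have h1 : Tendsto (fun t : ℝ => y - t) (𝓝[>] (0:ℝ)) (𝓝 y) := by
      have : Tendsto (fun t : ℝ => y - t) (𝓝 (0:ℝ)) (𝓝 (y - 0)) :=
        (continuous_const.sub continuous_id).tendsto 0
      simpa using this.mono_left nhdsWithin_le_nhds
    have h2 : Tendsto (fun t : ℝ => w (max (y - t) 0)) (𝓝[>] (0:ℝ)) (𝓝 (w y)) := by
      have := hcont.tendsto.comp h1
      simpa [Function.comp_def, max_eq_left (le_of_lt hy')] using this
    have h3 : Tendsto (fun t : ℝ =>
        ENNReal.ofReal ((Real.sqrt (w y) - Real.sqrt (w (max (y - t) 0))) ^ 2))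
        (𝓝[>] (0:ℝ)) (𝓝 0) := by
      have hreal : Tendsto (fun t : ℝ => (Real.sqrt (w y) - Real.sqrt (w (max (y - t) 0))) ^ 2)
          (𝓝[>] (0:ℝ)) (𝓝 0) := by
        have hφ : Tendsto (fun s : ℝ => (Real.sqrt (w y) - Real.sqrt s) ^ 2) (𝓝 (w y))
            (𝓝 ((Real.sqrt (w y) - Real.sqrt (w y)) ^ 2)) :=
          ((continuous_const.sub Real.continuous_sqrt).pow 2).tendsto (w y)
        have := hφ.comp h2
        simpa [Function.comp_def] using this
      have := (ENNReal.continuous_ofReal.tendsto 0).comp hreal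
      simpa [Function.comp_def] using this
    have h4 : Tendsto (fun t : ℝ =>
        ENNReal.ofReal ((Real.sqrt (w y) - Real.sqrt (w (max (y - t) 0))) ^ 2)
          * (‖g y‖₊ : ℝ≥0∞) ^ 2) (𝓝[>] (0:ℝ)) (𝓝 0) := by
      have := ENNReal.Tendsto.mul_const (b := (‖g y‖₊ : ℝ≥0∞) ^ 2) h3
        (Or.inr (ENNReal.pow_ne_top ENNReal.coe_ne_top))
      simpa using this
    exact h4.congr' hev
  have hDlim : Tendsto Dfun (𝓝[>] (0:ℝ)) (𝓝 0) := by
    have hdct := tendsto_lintegral_filter_of_dominated_convergence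
      (μ := volume.restrict (Ioi (0:ℝ)))
      (f := fun _ => (0:ℝ≥0∞))
      (fun y => ENNReal.ofReal (w y) * (‖g y‖₊ : ℝ≥0∞) ^ 2)
      (Eventually.of_forall hPhimeas) hbound hIg.ne hlim
    rw [lintegral_zero] at hdct
    refine hdct.congr' ?_
    filter_upwards [self_mem_nhdsWithin] with t ht
    exact (hDeq t ht).symm
  -- Step A : the point-evaluation term
  set LA : ℝ → ℝ≥0∞ := fun t =>
      ∫⁻ y in Ioi 0, (Ioc (0:ℝ) t).indicator (fun y => (‖g y‖₊ : ℝ≥0∞)) y with hLAdef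
  have hgfin : (∫⁻ y in Ioc (0:ℝ) 1, (‖g y‖₊ : ℝ≥0∞)) < ⊤ := by
    have h1 : ∫⁻ y in Ioc (0:ℝ) 1, (‖g y‖₊ : ℝ≥0∞) = ∫⁻ y in Ioc (0:ℝ) 1, (‖f' y‖₊ : ℝ≥0∞) :=
      lintegral_congr_ae ((ae_restrict_of_ae_restrict_of_subset Ioc_subset_Ioi_self hfg).mono
        fun x hx => by simp only [hx])
    rw [h1]
    refine lt_of_le_of_lt
      (lintegral_mono' (Measure.restrict_mono Ioc_subset_Icc_self le_rfl) le_rfl) ?_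
    exact (hint 1 zero_le_one).2
  have hLAval : ∀ t : ℝ, LA t = ∫⁻ y in Ioc (0:ℝ) t, (‖g y‖₊ : ℝ≥0∞) := by
    intro t
    rw [hLAdef]
    simp only
    rw [lintegral_indicator measurableSet_Ioc, Measure.restrict_restrict measurableSet_Ioc,
      inter_eq_left.2 Ioc_subset_Ioi_self]
  have hLAlim : Tendsto LA (𝓝[>] (0:ℝ)) (𝓝 0) := by
    have hdct := tendsto_lintegral_filter_of_dominated_convergence
      (μ := volume.restrict (Ioi (0:ℝ))) (l := 𝓝[>] (0:ℝ))
      (F := fun t y => (Ioc (0:ℝ) t).indicator (fun y => (‖g y‖₊ : ℝ≥0∞)) y)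
      (f := fun _ => (0:ℝ≥0∞))
      ((Ioc (0:ℝ) 1).indicator (fun y => (‖g y‖₊ : ℝ≥0∞)))
      (Eventually.of_forall fun t => hgm.enorm.indicator measurableSet_Ioc)
      ?_ ?_ ?_
    · rw [lintegral_zero] at hdct
      exact hdct
    · filter_upwards [Ioc_mem_nhdsGT_of_mem (mem_Ico.2 ⟨le_rfl, zero_lt_one⟩)] with t ht
      refine Eventually.of_forall fun y => ?_
      exact indicator_le_indicator_of_subset (Ioc_subset_Ioc_right ht.2) (fun y => zero_le) y
    · rw [lintegral_indicator measurableSet_Ioc, Measure.restrict_restrict measurableSet_Ioc,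
        inter_eq_left.2 Ioc_subset_Ioi_self]
      exact hgfin.ne
    · filter_upwards [ae_restrict_mem measurableSet_Ioi] with y hy
      have hy' : (0:ℝ) < y := hy
      refine tendsto_const_nhds.congr' ?_
      filter_upwards [Ioo_mem_nhdsGT_of_mem (mem_Ico.2 ⟨le_rfl, hy'⟩)] with t ht
      rw [indicator_of_notMem]
      intro hmem
      exact absurd hmem.2 (not_le.2 ht.2)
  have hA' : ∀ᶠ t in 𝓝[>] (0:ℝ), (‖f t - f 0‖₊ : ℝ≥0∞) ≤ LA t := by
    filter_upwards [self_mem_nhdsWithin] with t ht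
    have ht' : (0:ℝ) < t := ht
    have heq : f t - f 0 = ∫ y in Ioc (0:ℝ) t, f' y := by
      rw [hftc t (le_of_lt ht')]
      exact add_sub_cancel_left _ _
    rw [heq]
    refine le_trans (enorm_integral_le_lintegral_enorm _) ?_
    have h1 : ∫⁻ y in Ioc (0:ℝ) t, (‖f' y‖₊ : ℝ≥0∞) = ∫⁻ y in Ioc (0:ℝ) t, (‖g y‖₊ : ℝ≥0∞) :=
      lintegral_congr_ae ((ae_restrict_of_ae_restrict_of_subset Ioc_subset_Ioi_self hfg).mono
        fun x hx => by simp only [hx])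
    exact le_of_eq (h1.trans (hLAval t).symm)
  -- pointwise domination of the main integrand
  have hpt : ∀ t : ℝ, 0 < t → ∀ x : ℝ, x ∈ Ioi (0:ℝ) →
      ENNReal.ofReal (w x) * (‖g (t + x) - g x‖₊ : ℝ≥0∞) ^ 2
        ≤ 4 * (‖G (x + t) - G x‖₊ : ℝ≥0∞) ^ 2
          + 4 * (ENNReal.ofReal ((Real.sqrt (w (t + x)) - Real.sqrt (w x)) ^ 2)
            * (‖g (t + x)‖₊ : ℝ≥0∞) ^ 2) := by
    intro t ht x hx
    have hx0 : (0:ℝ) < x := hx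
    have hxt : x + t ∈ Ioi (0:ℝ) := mem_Ioi.2 (add_pos hx0 ht)
    have hGx : G x = Real.sqrt (w x) • g x := by
      rw [hGdef]; exact indicator_of_mem hx _
    have hGxt : G (x + t) = Real.sqrt (w (x + t)) • g (x + t) := by
      rw [hGdef]; exact indicator_of_mem hxt _
    have key : Real.sqrt (w x) • (g (t + x) - g x)
        = (G (x + t) - G x) - (Real.sqrt (w (t + x)) - Real.sqrt (w x)) • g (t + x) := by
      rw [hGx, hGxt, add_comm x t, smul_sub, sub_smul]
      abel
    calc ENNReal.ofReal (w x) * (‖g (t + x) - g x‖₊ : ℝ≥0∞) ^ 2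
        = (‖Real.sqrt (w x) • (g (t + x) - g x)‖₊ : ℝ≥0∞) ^ 2 := by
          rw [enn_sq_smul, Real.sq_sqrt (hwnn x hx0)]
      _ = (‖(G (x + t) - G x)
            - (Real.sqrt (w (t + x)) - Real.sqrt (w x)) • g (t + x)‖₊ : ℝ≥0∞) ^ 2 := by
          rw [key]
      _ ≤ ((‖G (x + t) - G x‖₊ : ℝ≥0∞)
            + (‖(Real.sqrt (w (t + x)) - Real.sqrt (w x)) • g (t + x)‖₊ : ℝ≥0∞)) ^ 2 := by
          gcongr
          exact_mod_cast nnnorm_sub_le _ _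
      _ ≤ 4 * (‖G (x + t) - G x‖₊ : ℝ≥0∞) ^ 2
            + 4 * (‖(Real.sqrt (w (t + x)) - Real.sqrt (w x)) • g (t + x)‖₊ : ℝ≥0∞) ^ 2 :=
          enn_sq_add_le _ _
      _ = _ := by rw [enn_sq_smul]
  have hBle : ∀ᶠ t in 𝓝[>] (0:ℝ),
      (∫⁻ x in Ioi 0, ENNReal.ofReal (w x) * (‖g (t + x) - g x‖₊ : ℝ≥0∞) ^ 2)
        ≤ 4 * (eLpNorm (fun x => G (x + t) - G x) 2 volume) ^ 2 + 4 * Dfun t := by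
    filter_upwards [self_mem_nhdsWithin] with t ht
    have ht' : (0:ℝ) < t := ht
    have hm1 : Measurable fun x : ℝ => (‖G (x + t) - G x‖₊ : ℝ≥0∞) ^ 2 :=
      ((hGsm.comp_measurable (measurable_id.add_const t)).sub hGsm).enorm.pow_const 2
    have hm2 : Measurable fun x : ℝ =>
        ENNReal.ofReal ((Real.sqrt (w (t + x)) - Real.sqrt (w x)) ^ 2)
          * (‖g (t + x)‖₊ : ℝ≥0∞) ^ 2 :=
      (ENNReal.measurable_ofReal.comp
        ((((hwmeas.comp (measurable_const.add measurable_id)).sqrt).sub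
          hwmeas.sqrt).pow_const 2)).mul
        ((hgm.comp_measurable (measurable_const.add measurable_id)).enorm.pow_const 2)
    calc ∫⁻ x in Ioi 0, ENNReal.ofReal (w x) * (‖g (t + x) - g x‖₊ : ℝ≥0∞) ^ 2
        ≤ ∫⁻ x in Ioi 0, (4 * (‖G (x + t) - G x‖₊ : ℝ≥0∞) ^ 2
            + 4 * (ENNReal.ofReal ((Real.sqrt (w (t + x)) - Real.sqrt (w x)) ^ 2)
              * (‖g (t + x)‖₊ : ℝ≥0∞) ^ 2)) :=
          lintegral_mono_ae ((ae_restrict_mem measurableSet_Ioi).mono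
            fun x hx => hpt t ht' x hx)
      _ = (∫⁻ x in Ioi 0, 4 * (‖G (x + t) - G x‖₊ : ℝ≥0∞) ^ 2)
            + ∫⁻ x in Ioi 0, 4 * (ENNReal.ofReal ((Real.sqrt (w (t + x)) - Real.sqrt (w x)) ^ 2)
              * (‖g (t + x)‖₊ : ℝ≥0∞) ^ 2) :=
          lintegral_add_left (hm1.const_mul 4) _
      _ = 4 * (∫⁻ x in Ioi 0, (‖G (x + t) - G x‖₊ : ℝ≥0∞) ^ 2) + 4 * Dfun t := by
          rw [lintegral_const_mul 4 hm1, lintegral_const_mul 4 hm2]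
      _ ≤ 4 * (eLpNorm (fun x => G (x + t) - G x) 2 volume) ^ 2 + 4 * Dfun t := by
          gcongr
          rw [l2sq]
          exact setLIntegral_le_lintegral _ _
  -- identify the goal with the `g`-version, eventually in `t`
  have hwEq : ∀ᶠ t in 𝓝[>] (0:ℝ), wNormSq w (f t - f 0) (fun x => f' (t + x) - f' x)
      = (‖f t - f 0‖₊ : ℝ≥0∞) ^ 2
        + ∫⁻ x in Ioi 0, ENNReal.ofReal (w x) * (‖g (t + x) - g x‖₊ : ℝ≥0∞) ^ 2 := by
    filter_upwards [self_mem_nhdsWithin] with t ht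
    have ht' : (0:ℝ) < t := ht
    simp only [wNormSq]
    congr 1
    refine lintegral_congr_ae ?_
    have htr : ∀ᵐ x ∂(volume : Measure ℝ), (t + x ∈ Ioi (0:ℝ) → f' (t + x) = g (t + x)) :=
      (measurePreserving_add_left volume t).quasiMeasurePreserving.ae hfg'
    filter_upwards [ae_restrict_mem measurableSet_Ioi, ae_restrict_of_ae hfg',
      ae_restrict_of_ae htr] with x hx h1 h2
    rw [h1 hx, h2 (mem_Ioi.2 (add_pos ht' hx))]
  -- assemble
  have hUb : ∀ᶠ t in 𝓝[>] (0:ℝ), wNormSq w (f t - f 0) (fun x => f' (t + x) - f' x)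
      ≤ (LA t) ^ 2 + (4 * (eLpNorm (fun x => G (x + t) - G x) 2 volume) ^ 2 + 4 * Dfun t) := by
    filter_upwards [hwEq, hA', hBle] with t h1 h2 h3
    rw [h1]
    exact add_le_add (by gcongr) h3
  have hUlim : Tendsto (fun t => (LA t) ^ 2
      + (4 * (eLpNorm (fun x => G (x + t) - G x) 2 volume) ^ 2 + 4 * Dfun t))
      (𝓝[>] (0:ℝ)) (𝓝 0) := by
    have l1 : Tendsto (fun t => (LA t) ^ 2) (𝓝[>] (0:ℝ)) (𝓝 0) := by
      have := ENNReal.Tendsto.pow (n := 2) hLAlim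
      simpa using this
    have l2 : Tendsto (fun t => 4 * (eLpNorm (fun x => G (x + t) - G x) 2 volume) ^ 2)
        (𝓝[>] (0:ℝ)) (𝓝 0) := by
      have := ENNReal.Tendsto.const_mul (a := 4) hC (Or.inr (by simp))
      simpa using this
    have l3 : Tendsto (fun t => 4 * Dfun t) (𝓝[>] (0:ℝ)) (𝓝 0) := by
      have := ENNReal.Tendsto.const_mul (a := 4) hDlim (Or.inr (by simp))
      simpa using this
    have := l1.add (l2.add l3)
    simpa using this
  exact tendsto_of_tendsto_of_tendsto_of_le_of_le' tendsto_const_nhds hUlim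
    (Eventually.of_forall fun t => zero_le) hUb
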